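/- Let P_n(x) be the Eulerian polynomials defined by P_0(x)=1 and P_{n+1}(x)=(nx+1)P_n(x)+x(1−x)P_n'(x). Then for every n≥1 and 0<q<1, x>0, one has d^n/dx^n log[x]_q = −(log q)^n · q^x P_{n−1}(q^x)/(1−q^x)^n; consequently, for 0<q<1 and a≥0, d^n/dx^n ψ_q(x+a) = (log q)^{n+1} Σ_{i=0}^∞ q^{x+a+i} P_n(q^{x+a+i})/(1−q^{x+a+i})^{n+1}. -/

import Mathlib

open Real Set

/-- The infinite q-Pochhammer symbol `(a;q)_∞ = ∏_{k≥0} (1 - a q^k)`. -/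
noncomputable def qPochInf (a q : ℝ) : ℝ := ∏' k : ℕ, (1 - a * q ^ k)

/-- Jackson's q-gamma function for `0 < q < 1`. -/
noncomputable def qGamma (q x : ℝ) : ℝ :=
  qPochInf q q / qPochInf (q ^ x) q * (1 - q) ^ (1 - x)

/-- The q-digamma function `ψ_q = (log Γ_q)'`. -/
noncomputable def qDigamma (q x : ℝ) : ℝ := deriv (fun y => Real.log (qGamma q y)) x

/-- Eulerian polynomials: `P_0 = 1`, `P_{n+1}(x) = (n x + 1) P_n(x) + x(1-x) P_n'(x)`. -/
noncomputable def eulerPoly : ℕ → Polynomial ℝ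
  | 0 => 1
  | n + 1 => (Polynomial.C (n : ℝ) * Polynomial.X + 1) * eulerPoly n
      + Polynomial.X * (1 - Polynomial.X) * Polynomial.derivative (eulerPoly n)


noncomputable def Fq (q : ℝ) (n : ℕ) (z : ℝ) : ℝ :=
  q ^ z * (eulerPoly n).eval (q ^ z) / (1 - q ^ z) ^ (n + 1)

noncomputable def Mb (P : Polynomial ℝ) : ℝ :=
  ∑ i ∈ Finset.range (P.natDegree + 1), |P.coeff i|

lemma abs_eval_le (P : Polynomial ℝ) {t : ℝ} (h0 : 0 ≤ t) (h1 : t ≤ 1) :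
    |P.eval t| ≤ Mb P := by
  rw [Polynomial.eval_eq_sum_range]
  refine (Finset.abs_sum_le_sum_abs _ _).trans ?_
  refine Finset.sum_le_sum fun i _ => ?_
  rw [abs_mul]
  have h : |t ^ i| ≤ 1 := by
    rw [abs_pow, abs_of_nonneg h0]
    exact pow_le_one₀ h0 h1
  calc |P.coeff i| * |t ^ i| ≤ |P.coeff i| * 1 :=
        mul_le_mul_of_nonneg_left h (abs_nonneg _)
    _ = |P.coeff i| := mul_one _

section Aux
variable {q : ℝ} (hq0 : 0 < q) (hq1 : q < 1)
include hq0 hq1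

lemma q_rpow_lt_one {z : ℝ} (hz : 0 < z) : q ^ z < 1 :=
  Real.rpow_lt_one hq0.le hq1 hz

omit hq1 in
lemma q_rpow_add_nat (z : ℝ) (k : ℕ) : q ^ (z + (k:ℝ)) = q ^ z * q ^ k := by
  rw [Real.rpow_add hq0, Real.rpow_natCast]

lemma Fq_abs_le (n : ℕ) {c z : ℝ} (hc : 0 < c) (hz : c ≤ z) :
    |Fq q n z| ≤ q ^ z * (Mb (eulerPoly n) / (1 - q ^ c) ^ (n + 1)) := by
  have hz0 : 0 < z := lt_of_lt_of_le hc hz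
  have ht0 : 0 < q ^ z := Real.rpow_pos_of_pos hq0 z
  have ht1 : q ^ z < 1 := q_rpow_lt_one hq0 hq1 hz0
  have hc1 : q ^ c < 1 := q_rpow_lt_one hq0 hq1 hc
  have hzc : q ^ z ≤ q ^ c := Real.rpow_le_rpow_of_exponent_ge hq0 hq1.le hz
  have h1 : (0:ℝ) < 1 - q ^ c := by linarith
  have h2 : (1:ℝ) - q ^ c ≤ 1 - q ^ z := by linarith
  have h3 : (0:ℝ) < 1 - q ^ z := by linarith
  have hMb : 0 ≤ Mb (eulerPoly n) := Finset.sum_nonneg fun i _ => abs_nonneg _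
  have hnum : q ^ z * |(eulerPoly n).eval (q ^ z)| ≤ q ^ z * Mb (eulerPoly n) :=
    mul_le_mul_of_nonneg_left (abs_eval_le _ ht0.le ht1.le) ht0.le
  have hden : (1 - q ^ c) ^ (n + 1) ≤ (1 - q ^ z) ^ (n + 1) := pow_le_pow_left₀ h1.le h2 _
  rw [Fq, abs_div, abs_mul, abs_of_pos ht0, abs_of_pos (pow_pos h3 (n+1))]
  calc q ^ z * |(eulerPoly n).eval (q ^ z)| / (1 - q ^ z) ^ (n + 1)
      ≤ q ^ z * Mb (eulerPoly n) / (1 - q ^ c) ^ (n + 1) :=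
        div_le_div₀ (by positivity) hnum (pow_pos h1 _) hden
    _ = q ^ z * (Mb (eulerPoly n) / (1 - q ^ c) ^ (n + 1)) := by ring

lemma summable_Fq (n : ℕ) {z : ℝ} (hz : 0 < z) :
    Summable fun k : ℕ => Fq q n (z + (k:ℝ)) := by
  have hgeo : Summable fun k : ℕ =>
      (q ^ z * (Mb (eulerPoly n) / (1 - q ^ z) ^ (n + 1))) * q ^ k :=
    Summable.mul_left _ (summable_geometric_of_lt_one hq0.le hq1)
  refine Summable.of_norm_bounded hgeo fun k => ?_
  have hk : z ≤ z + (k:ℝ) := le_add_of_nonneg_right k.cast_nonneg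
  have h := Fq_abs_le hq0 hq1 n hz hk
  rw [q_rpow_add_nat hq0] at h
  rw [Real.norm_eq_abs]
  calc |Fq q n (z + (k:ℝ))|
      ≤ q ^ z * q ^ k * (Mb (eulerPoly n) / (1 - q ^ z) ^ (n + 1)) := h
    _ = q ^ z * (Mb (eulerPoly n) / (1 - q ^ z) ^ (n + 1)) * q ^ k := by ring
end Aux

lemma eulerPoly_succ_eval (n : ℕ) (t : ℝ) :
    (eulerPoly (n + 1)).eval t =
      ((n : ℝ) * t + 1) * (eulerPoly n).eval t
        + t * (1 - t) * ((eulerPoly n).derivative.eval t) := by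
  simp [eulerPoly]

section Swap
variable {q : ℝ} (hq0 : 0 < q) (hq1 : q < 1)
include hq0 hq1

lemma hasDerivAt_Fq (n : ℕ) {x : ℝ} (hx : 0 < x) :
    HasDerivAt (Fq q n) (Real.log q * Fq q (n + 1) x) x := by
  have ht0 : 0 < q ^ x := Real.rpow_pos_of_pos hq0 x
  have ht1 : q ^ x < 1 := q_rpow_lt_one hq0 hq1 hx
  have hne : (1 : ℝ) - q ^ x ≠ 0 := by linarith
  have hE : HasDerivAt (fun y : ℝ => q ^ y) (q ^ x * Real.log q) x :=
    (Real.hasStrictDerivAt_const_rpow hq0 x).hasDerivAt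
  have hP : HasDerivAt (fun y : ℝ => (eulerPoly n).eval (q ^ y))
      ((eulerPoly n).derivative.eval (q ^ x) * (q ^ x * Real.log q)) x :=
    ((eulerPoly n).hasDerivAt (q ^ x)).comp x hE
  have hA := hE.mul hP
  have hB : HasDerivAt (fun y : ℝ => (1 - q ^ y) ^ (n + 1))
      (((n:ℝ)+1) * (1 - q ^ x) ^ n * (0 - q ^ x * Real.log q)) x := by
    have := ((hasDerivAt_const x (1:ℝ)).sub hE).pow (n+1)
    simpa [Pi.sub_def, Pi.pow_def] using this
  have hBne : ((1 : ℝ) - q ^ x) ^ (n + 1) ≠ 0 := pow_ne_zero _ hne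
  have := hA.div hB hBne
  refine this.congr_deriv ?_
  simp only [Fq, eulerPoly_succ_eval, Pi.mul_apply]
  field_simp
  ring

lemma hasDerivAt_tsum_Fq (n : ℕ) {a x : ℝ} (ha : 0 ≤ a) (hx : 0 < x) :
    HasDerivAt (fun y => ∑' k : ℕ, Fq q n (y + a + (k:ℝ)))
      (Real.log q * ∑' k : ℕ, Fq q (n + 1) (x + a + (k:ℝ))) x := by
  set c : ℝ := x / 2 + a with hcdef
  have hc : 0 < c := by positivity
  have hqc1 : q ^ c < 1 := q_rpow_lt_one hq0 hq1 hc
  set M : ℝ := Mb (eulerPoly (n + 1)) / (1 - q ^ c) ^ (n + 2) with hMdef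
  have hMb : 0 ≤ Mb (eulerPoly (n + 1)) := Finset.sum_nonneg fun i _ => abs_nonneg _
  have hM : 0 ≤ M := div_nonneg hMb (pow_pos (by linarith) _).le
  have hu : Summable fun k : ℕ => |Real.log q| * (q ^ c * M) * q ^ k :=
    Summable.mul_left _ (summable_geometric_of_lt_one hq0.le hq1)
  have key := hasDerivAt_tsum_of_isPreconnected hu (isOpen_Ioi (a := x / 2))
    (isPreconnected_Ioi)
    (g := fun (k : ℕ) (y : ℝ) => Fq q n (y + a + (k:ℝ)))
    (g' := fun (k : ℕ) (y : ℝ) => Real.log q * Fq q (n + 1) (y + a + (k:ℝ)))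
    (y₀ := x) ?_ ?_ ?_ ?_ (show x ∈ Ioi (x / 2) by rw [mem_Ioi]; linarith)
  · refine key.congr_deriv ?_
    exact tsum_mul_left
  · intro k y hy
    rw [mem_Ioi] at hy
    have hk : (0:ℝ) ≤ (k:ℝ) := k.cast_nonneg
    have hy' : (0:ℝ) < y + a + (k:ℝ) := by linarith
    have h1 : HasDerivAt (fun z : ℝ => z + a + (k:ℝ)) 1 y :=
      ((hasDerivAt_id y).add_const a).add_const _
    simpa [Function.comp_def] using (hasDerivAt_Fq hq0 hq1 n hy').comp y h1
  · intro k y hy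
    rw [mem_Ioi] at hy
    have hk : (0:ℝ) ≤ (k:ℝ) := k.cast_nonneg
    have hck : c + (k:ℝ) ≤ y + a + (k:ℝ) := by simp only [hcdef]; linarith
    have h := Fq_abs_le hq0 hq1 (n + 1) hc (le_trans (le_add_of_nonneg_right hk) hck)
    have hq' : q ^ (y + a + (k:ℝ)) ≤ q ^ c * q ^ k :=
      (Real.rpow_le_rpow_of_exponent_ge hq0 hq1.le hck).trans_eq
        (q_rpow_add_nat hq0 c k)
    rw [Real.norm_eq_abs, abs_mul]
    calc |Real.log q| * |Fq q (n + 1) (y + a + (k:ℝ))|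
        ≤ |Real.log q| * (q ^ (y + a + (k:ℝ)) * M) :=
          mul_le_mul_of_nonneg_left h (abs_nonneg _)
      _ ≤ |Real.log q| * (q ^ c * q ^ k * M) :=
          mul_le_mul_of_nonneg_left
            (mul_le_mul_of_nonneg_right hq' hM) (abs_nonneg _)
      _ = |Real.log q| * (q ^ c * M) * q ^ k := by ring
  · exact mem_Ioi.2 (by linarith)
  · exact summable_Fq hq0 hq1 n (show (0:ℝ) < x + a by linarith)
end Swap

lemma hasProd_of_hasSum_log (f : ℕ → ℝ) (hf : ∀ k, 0 < f k) {s : ℝ}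
    (h : HasSum (fun k => Real.log (f k)) s) : HasProd f (Real.exp s) := by
  have ht := (Real.continuous_exp.tendsto s).comp h
  refine ht.congr fun A => ?_
  rw [Function.comp_apply, Real.exp_sum]
  exact Finset.prod_congr rfl fun k _ => Real.exp_log (hf k)

section Psi
variable {q : ℝ} (hq0 : 0 < q) (hq1 : q < 1)
include hq0 hq1

lemma one_sub_q_pos {z : ℝ} (hz : 0 < z) : 0 < 1 - q ^ z := by
  have := q_rpow_lt_one hq0 hq1 hz; linarith

lemma summable_log_q (z : ℝ) (hz : 0 < z) :
    Summable fun k : ℕ => Real.log (1 - q ^ (z + (k:ℝ))) := by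
  have h1 : 0 < 1 - q ^ z := one_sub_q_pos hq0 hq1 hz
  have hz1 : q ^ z < 1 := q_rpow_lt_one hq0 hq1 hz
  have hz0 : 0 < q ^ z := Real.rpow_pos_of_pos hq0 z
  refine Summable.of_norm_bounded (g := fun k : ℕ => q ^ z / (1 - q ^ z) * q ^ k)
    (Summable.mul_left _ (summable_geometric_of_lt_one hq0.le hq1)) fun k => ?_
  have hk : (0:ℝ) ≤ (k:ℝ) := k.cast_nonneg
  have hzk : 0 < z + (k:ℝ) := by linarith
  have ht0 : 0 < q ^ (z + (k:ℝ)) := Real.rpow_pos_of_pos hq0 _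
  have ht1 : q ^ (z + (k:ℝ)) < 1 := q_rpow_lt_one hq0 hq1 hzk
  have hpos : 0 < 1 - q ^ (z + (k:ℝ)) := by linarith
  have hteq : q ^ (z + (k:ℝ)) = q ^ z * q ^ k := q_rpow_add_nat hq0 z k
  have hqk1 : q ^ k ≤ 1 := pow_le_one₀ hq0.le hq1.le
  have htz : q ^ (z + (k:ℝ)) ≤ q ^ z := by
    rw [hteq]
    calc q ^ z * q ^ k ≤ q ^ z * 1 := mul_le_mul_of_nonneg_left hqk1 hz0.le
      _ = q ^ z := mul_one _
  have hlog : Real.log (1 - q ^ (z + (k:ℝ))) ≤ 0 :=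
    Real.log_nonpos (by linarith) (by linarith)
  rw [Real.norm_eq_abs, abs_of_nonpos hlog]
  have h2 : Real.log (1 - q ^ (z + (k:ℝ)))⁻¹ ≤ (1 - q ^ (z + (k:ℝ)))⁻¹ - 1 :=
    Real.log_le_sub_one_of_pos (by positivity)
  rw [Real.log_inv] at h2
  have h4 : (1 - q ^ (z + (k:ℝ)))⁻¹ - 1 = q ^ (z + (k:ℝ)) / (1 - q ^ (z + (k:ℝ))) := by
    field_simp
    ring
  have h3 : -Real.log (1 - q ^ (z + (k:ℝ))) ≤
      q ^ (z + (k:ℝ)) / (1 - q ^ (z + (k:ℝ))) := by rw [← h4]; linarith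
  refine h3.trans ?_
  calc q ^ (z + (k:ℝ)) / (1 - q ^ (z + (k:ℝ)))
      ≤ q ^ z * q ^ k / (1 - q ^ z) :=
        div_le_div₀ (by positivity) (le_of_eq hteq) h1 (by linarith)
    _ = q ^ z / (1 - q ^ z) * q ^ k := by ring

lemma qPochInf_rpow (z : ℝ) (hz : 0 < z) :
    qPochInf (q ^ z) q = Real.exp (∑' k : ℕ, Real.log (1 - q ^ (z + (k:ℝ)))) := by
  have hsum := (summable_log_q hq0 hq1 z hz).hasSum
  have hf : ∀ k : ℕ, 0 < 1 - q ^ (z + (k:ℝ)) := fun k =>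
    one_sub_q_pos hq0 hq1 (by have : (0:ℝ) ≤ (k:ℝ) := k.cast_nonneg; linarith)
  have hp := hasProd_of_hasSum_log _ hf hsum
  have he : qPochInf (q ^ z) q = ∏' k : ℕ, (1 - q ^ (z + (k:ℝ))) := by
    rw [qPochInf]
    congr 1
    funext k
    rw [q_rpow_add_nat hq0]
  rw [he, hp.tprod_eq]

lemma qPochInf_q_pos : 0 < qPochInf q q := by
  have h : qPochInf q q = qPochInf (q ^ (1:ℝ)) q := by rw [Real.rpow_one]
  rw [h, qPochInf_rpow hq0 hq1 1 one_pos]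
  exact Real.exp_pos _

lemma hasDerivAt_logsum {x : ℝ} (hx : 0 < x) :
    HasDerivAt (fun y => ∑' k : ℕ, Real.log (1 - q ^ (y + (k:ℝ))))
      (-(Real.log q * ∑' k : ℕ, Fq q 0 (x + (k:ℝ)))) x := by
  set c : ℝ := x / 2 with hcdef
  have hc : 0 < c := by positivity
  have hqc1 : q ^ c < 1 := q_rpow_lt_one hq0 hq1 hc
  set M : ℝ := Mb (eulerPoly 0) / (1 - q ^ c) ^ 1 with hMdef
  have hMb : 0 ≤ Mb (eulerPoly 0) := Finset.sum_nonneg fun i _ => abs_nonneg _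
  have hM : 0 ≤ M := div_nonneg hMb (pow_pos (by linarith) _).le
  have hu : Summable fun k : ℕ => |Real.log q| * (q ^ c * M) * q ^ k :=
    Summable.mul_left _ (summable_geometric_of_lt_one hq0.le hq1)
  have key := hasDerivAt_tsum_of_isPreconnected hu (isOpen_Ioi (a := x / 2))
    (isPreconnected_Ioi)
    (g := fun (k : ℕ) (y : ℝ) => Real.log (1 - q ^ (y + (k:ℝ))))
    (g' := fun (k : ℕ) (y : ℝ) => -(Real.log q * Fq q 0 (y + (k:ℝ))))
    (y₀ := x) ?_ ?_ ?_ ?_ (show x ∈ Ioi (x / 2) by rw [mem_Ioi]; linarith)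
  · refine key.congr_deriv ?_
    rw [tsum_neg, tsum_mul_left]
  · intro k y hy
    rw [mem_Ioi] at hy
    have hk : (0:ℝ) ≤ (k:ℝ) := k.cast_nonneg
    have hy' : (0:ℝ) < y + (k:ℝ) := by linarith
    have hpos : 0 < 1 - q ^ (y + (k:ℝ)) := one_sub_q_pos hq0 hq1 hy'
    have h1 : HasDerivAt (fun z : ℝ => z + (k:ℝ)) 1 y := (hasDerivAt_id y).add_const _
    have hE : HasDerivAt (fun z : ℝ => q ^ z) (q ^ (y + (k:ℝ)) * Real.log q) (y + (k:ℝ)) :=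
      (Real.hasStrictDerivAt_const_rpow hq0 _).hasDerivAt
    have hE2 : HasDerivAt (fun z : ℝ => q ^ (z + (k:ℝ)))
        (q ^ (y + (k:ℝ)) * Real.log q) y := by simpa [Function.comp_def] using hE.comp y h1
    have hI : HasDerivAt (fun z : ℝ => 1 - q ^ (z + (k:ℝ)))
        (0 - q ^ (y + (k:ℝ)) * Real.log q) y := (hasDerivAt_const y (1:ℝ)).sub hE2
    have := hI.log (ne_of_gt hpos)
    refine this.congr_deriv ?_
    simp only [Fq]
    have : (eulerPoly 0).eval (q ^ (y + (k:ℝ))) = 1 := by simp [eulerPoly]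
    rw [this]
    have hne : (1:ℝ) - q ^ (y + (k:ℝ)) ≠ 0 := ne_of_gt hpos
    field_simp
    ring
  · intro k y hy
    rw [mem_Ioi] at hy
    have hk : (0:ℝ) ≤ (k:ℝ) := k.cast_nonneg
    have hck : c + (k:ℝ) ≤ y + (k:ℝ) := by linarith
    have h := Fq_abs_le hq0 hq1 0 hc (le_trans (le_add_of_nonneg_right hk) hck)
    have hq' : q ^ (y + (k:ℝ)) ≤ q ^ c * q ^ k :=
      (Real.rpow_le_rpow_of_exponent_ge hq0 hq1.le hck).trans_eq (q_rpow_add_nat hq0 c k)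
    rw [Real.norm_eq_abs, abs_neg, abs_mul]
    calc |Real.log q| * |Fq q 0 (y + (k:ℝ))|
        ≤ |Real.log q| * (q ^ (y + (k:ℝ)) * M) := mul_le_mul_of_nonneg_left h (abs_nonneg _)
      _ ≤ |Real.log q| * (q ^ c * q ^ k * M) :=
          mul_le_mul_of_nonneg_left (mul_le_mul_of_nonneg_right hq' hM) (abs_nonneg _)
      _ = |Real.log q| * (q ^ c * M) * q ^ k := by ring
  · exact mem_Ioi.2 (by linarith)
  · exact summable_log_q hq0 hq1 x hx

lemma qDigamma_eq {z : ℝ} (hz : 0 < z) :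
    qDigamma q z = Real.log q * (∑' k : ℕ, Fq q 0 (z + (k:ℝ))) - Real.log (1 - q) := by
  have h1q : 0 < 1 - q := by linarith
  have hC : 0 < qPochInf q q := qPochInf_q_pos hq0 hq1
  have hEq : (fun y => Real.log (qGamma q y)) =ᶠ[nhds z]
      (fun y => Real.log (qPochInf q q) - (∑' k : ℕ, Real.log (1 - q ^ (y + (k:ℝ))))
        + (1 - y) * Real.log (1 - q)) := by
    filter_upwards [Ioi_mem_nhds hz] with y hy
    rw [mem_Ioi] at hy
    rw [qGamma, qPochInf_rpow hq0 hq1 y hy]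
    rw [Real.log_mul (by positivity) (ne_of_gt (Real.rpow_pos_of_pos h1q _)),
      Real.log_div (ne_of_gt hC) (Real.exp_ne_zero _), Real.log_exp,
      Real.log_rpow h1q]
  rw [qDigamma, hEq.deriv_eq]
  have hL : HasDerivAt (fun y : ℝ => Real.log (qPochInf q q)
        - (∑' k : ℕ, Real.log (1 - q ^ (y + (k:ℝ)))) + (1 - y) * Real.log (1 - q))
      (0 - (-(Real.log q * ∑' k : ℕ, Fq q 0 (z + (k:ℝ)))) + -1 * Real.log (1 - q)) z :=
    ((hasDerivAt_const z _).sub (hasDerivAt_logsum hq0 hq1 hz)).add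
      (((hasDerivAt_id z).const_sub 1).mul_const _)
  rw [hL.deriv]
  ring
end Psi

section Main
variable {q : ℝ} (hq0 : 0 < q) (hq1 : q < 1)
include hq0 hq1

lemma part1 (n : ℕ) : ∀ x : ℝ, 0 < x →
    iteratedDeriv (n + 1) (fun y => Real.log ((1 - q ^ y) / (1 - q))) x
      = -(Real.log q ^ (n + 1)) * Fq q n x := by
  induction n with
  | zero =>
    intro x hx
    rw [iteratedDeriv_one]
    have hEq : (fun y : ℝ => Real.log ((1 - q ^ y) / (1 - q))) =ᶠ[nhds x]
        (fun y => Real.log (1 - q ^ y) - Real.log (1 - q)) := by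
      filter_upwards [Ioi_mem_nhds hx] with y hy
      rw [mem_Ioi] at hy
      rw [Real.log_div (ne_of_gt (one_sub_q_pos hq0 hq1 hy)) (by linarith)]
    rw [hEq.deriv_eq]
    have hpos : 0 < 1 - q ^ x := one_sub_q_pos hq0 hq1 hx
    have hE : HasDerivAt (fun y : ℝ => q ^ y) (q ^ x * Real.log q) x :=
      (Real.hasStrictDerivAt_const_rpow hq0 x).hasDerivAt
    have hI : HasDerivAt (fun y : ℝ => 1 - q ^ y) (0 - q ^ x * Real.log q) x :=
      (hasDerivAt_const x (1:ℝ)).sub hE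
    have hL := (hI.log (ne_of_gt hpos)).sub_const (Real.log (1 - q))
    rw [hL.deriv]
    have h1 : (eulerPoly 0).eval (q ^ x) = 1 := by simp [eulerPoly]
    simp only [Fq, h1]
    have hne : (1:ℝ) - q ^ x ≠ 0 := ne_of_gt hpos
    field_simp
    ring
  | succ n ih =>
    intro x hx
    rw [iteratedDeriv_succ]
    have hEq : iteratedDeriv (n + 1) (fun y => Real.log ((1 - q ^ y) / (1 - q)))
        =ᶠ[nhds x] fun y => -(Real.log q ^ (n + 1)) * Fq q n y := by
      filter_upwards [Ioi_mem_nhds hx] with y hy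
      rw [mem_Ioi] at hy
      exact ih y hy
    rw [hEq.deriv_eq]
    have hD := (hasDerivAt_Fq hq0 hq1 n hx).const_mul (-(Real.log q ^ (n + 1)))
    rw [hD.deriv]
    ring

lemma part2 (a : ℝ) (ha : 0 ≤ a) (n : ℕ) : ∀ x : ℝ, 0 < x →
    iteratedDeriv (n + 1) (fun y => qDigamma q (y + a)) x
      = Real.log q ^ (n + 1 + 1) * ∑' k : ℕ, Fq q (n + 1) (x + a + (k:ℝ)) := by
  induction n with
  | zero =>
    intro x hx
    rw [iteratedDeriv_one]
    have hEq : (fun y : ℝ => qDigamma q (y + a)) =ᶠ[nhds x]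
        (fun y => Real.log q * (∑' k : ℕ, Fq q 0 (y + a + (k:ℝ))) - Real.log (1 - q)) := by
      filter_upwards [Ioi_mem_nhds hx] with y hy
      rw [mem_Ioi] at hy
      exact qDigamma_eq hq0 hq1 (show (0:ℝ) < y + a by linarith)
    rw [hEq.deriv_eq]
    have hD := ((hasDerivAt_tsum_Fq hq0 hq1 0 ha hx).const_mul
      (Real.log q)).sub_const (Real.log (1 - q))
    rw [hD.deriv]
    ring
  | succ n ih =>
    intro x hx
    rw [iteratedDeriv_succ]
    have hEq : iteratedDeriv (n + 1) (fun y => qDigamma q (y + a)) =ᶠ[nhds x]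
        fun y => Real.log q ^ (n + 1 + 1) * ∑' k : ℕ, Fq q (n + 1) (y + a + (k:ℝ)) := by
      filter_upwards [Ioi_mem_nhds hx] with y hy
      rw [mem_Ioi] at hy
      exact ih y hy
    rw [hEq.deriv_eq]
    have hD := (hasDerivAt_tsum_Fq hq0 hq1 (n + 1) ha hx).const_mul
      (Real.log q ^ (n + 1 + 1))
    rw [hD.deriv]
    ring
end Main

theorem stmt1 (q : ℝ) (hq0 : 0 < q) (hq1 : q < 1) :
    (∀ n : ℕ, 1 ≤ n → ∀ x : ℝ, 0 < x →
      iteratedDeriv n (fun y => Real.log ((1 - q ^ y) / (1 - q))) x =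
        -(Real.log q ^ n) * (q ^ x * (eulerPoly (n - 1)).eval (q ^ x) / (1 - q ^ x) ^ n)) ∧
    (∀ n : ℕ, 1 ≤ n → ∀ a : ℝ, 0 ≤ a → ∀ x : ℝ, 0 < x →
      iteratedDeriv n (fun y => qDigamma q (y + a)) x =
        Real.log q ^ (n + 1) *
          ∑' i : ℕ, q ^ (x + a + (i : ℝ)) * (eulerPoly n).eval (q ^ (x + a + (i : ℝ))) /
            (1 - q ^ (x + a + (i : ℝ))) ^ (n + 1)) := by
  constructor
  · intro n hn x hx
    obtain ⟨m, rfl⟩ : ∃ m, n = m + 1 := ⟨n - 1, (Nat.succ_pred_eq_of_pos hn).symm⟩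
    have h := part1 hq0 hq1 m x hx
    simp only [Fq] at h
    simpa only [Nat.add_sub_cancel] using h
  · intro n hn a ha x hx
    obtain ⟨m, rfl⟩ : ∃ m, n = m + 1 := ⟨n - 1, (Nat.succ_pred_eq_of_pos hn).symm⟩
    have h := part2 hq0 hq1 a ha m x hx
    simp only [Fq] at h
    exact h
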